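/- Let A be a commutative ring finite as a module over a complete local Noetherian ring (R, m) via a ring map R → A, and suppose A ⊗_R (R/m) is a local ring. Then A is a local ring, with maximal ideal the kernel of the composite A → A ⊗_R (R/m) → residue field. -/
import Mathlib


/-- Let `A` be a commutative algebra, finite as a module over a complete local
Noetherian ring `(R, m)`, such that `A ⊗_R R/m = A/mA` is a local ring.  Then
`A` is local, with maximal ideal the kernel of the composite
`A → A/mA → residue field`. -/
theorem stmt_19 (R A : Type*) [CommRing R] [IsNoetherianRing R] [IsLocalRing R]
    [IsAdicComplete (IsLocalRing.maximalIdeal R) R]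
    [CommRing A] [Algebra R A] [Module.Finite R A]
    [hq : IsLocalRing (A ⧸ (IsLocalRing.maximalIdeal R).map (algebraMap R A))] :
    ∃ hA : IsLocalRing A,
      @IsLocalRing.maximalIdeal A _ hA =
        RingHom.ker ((IsLocalRing.residue (A ⧸ (IsLocalRing.maximalIdeal R).map (algebraMap R A))).comp
          (Ideal.Quotient.mk ((IsLocalRing.maximalIdeal R).map (algebraMap R A)))) := by
  set I := (IsLocalRing.maximalIdeal R).map (algebraMap R A) with hI
  have hsurj : Function.Surjective (Ideal.Quotient.mk I) := Ideal.Quotient.mk_surjective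
  have : Algebra.IsIntegral R A := Algebra.IsIntegral.of_finite R A
  -- every maximal ideal of A contains I
  have hIle : ∀ (n : Ideal A), n.IsMaximal → I ≤ n := by
    intro n hn
    have : (n.comap (algebraMap R A)).IsMaximal :=
      Ideal.isMaximal_comap_of_isIntegral_of_isMaximal n
    have h1 : n.comap (algebraMap R A) = IsLocalRing.maximalIdeal R :=
      IsLocalRing.eq_maximalIdeal this
    rw [hI, Ideal.map_le_iff_le_comap, h1]
  set J : Ideal A := (IsLocalRing.maximalIdeal (A ⧸ I)).comap (Ideal.Quotient.mk I) with hJ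
  have hJmax : J.IsMaximal := Ideal.comap_isMaximal_of_surjective _ hsurj
  have huniq : ∀ (n : Ideal A), n.IsMaximal → n = J := by
    intro n hn
    have hker : RingHom.ker (Ideal.Quotient.mk I) ≤ n := by
      rw [Ideal.mk_ker]; exact hIle n hn
    have hmapmax : (n.map (Ideal.Quotient.mk I)).IsMaximal := by
      rcases Ideal.map_eq_top_or_isMaximal_of_surjective _ hsurj hn with h | h
      · exfalso
        apply hn.ne_top
        have := Ideal.comap_map_of_surjective _ hsurj n
        rw [h, Ideal.comap_top] at this
        rw [← RingHom.ker_eq_comap_bot, sup_eq_left.mpr hker] at this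
        exact this.symm
      · exact h
    have : n.map (Ideal.Quotient.mk I) = IsLocalRing.maximalIdeal (A ⧸ I) :=
      IsLocalRing.eq_maximalIdeal hmapmax
    rw [hJ, ← this, Ideal.comap_map_of_surjective _ hsurj, ← RingHom.ker_eq_comap_bot,
      sup_eq_left.mpr hker]
  have hA : IsLocalRing A := IsLocalRing.of_unique_max_ideal ⟨J, hJmax, huniq⟩
  refine ⟨hA, ?_⟩
  have h1 : @IsLocalRing.maximalIdeal A _ hA = J :=
    huniq _ (@IsLocalRing.maximalIdeal.isMaximal A _ hA)
  rw [h1, hJ, ← IsLocalRing.ker_residue, ← RingHom.comap_ker]
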